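/- Under the setup of the pathwise $\varepsilon$-approximations with pointwise limit $Y$: the limit $Y$ is continuous at every point of the open set $\{t\ge 0 : Y(t)>0\}$ (including $t=0$, where $Y(0)=Y_0>0$ and $\lim_{t\to 0+}Y(t)=Y_0$). -/
import Mathlib


open Filter Topology MeasureTheory Set

private lemma ite_eq_max' (x : ℝ) : (if 0 < x then x else 0) = max x 0 := by
  rcases lt_or_ge 0 x with h | h
  · rw [if_pos h, max_eq_left h.le]
  · rw [if_neg (not_lt.2 h), max_eq_right h]

/-- The difference of two approximations has a right derivative given by the drift difference. -/
private lemma diff_hasDeriv (Y₀ k a σ : ℝ)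
    (g : ℝ → ℝ) (Y : ℝ → ℝ → ℝ)
    (hYc : ∀ ε : ℝ, 0 < ε → Continuous (Y ε))
    (hYeq : ∀ ε : ℝ, 0 < ε → ∀ t : ℝ, 0 ≤ t →
      Y ε t = Y₀ + (∫ s in (0:ℝ)..t, k / ((if 0 < Y ε s then Y ε s else 0) + ε))
        - a * (∫ s in (0:ℝ)..t, Y ε s) + σ * g t)
    {ε₁ ε₂ : ℝ} (h1 : 0 < ε₁) (h2 : 0 < ε₂) {x : ℝ} (hx : 0 ≤ x) :
    HasDerivWithinAt (fun t => Y ε₂ t - Y ε₁ t)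
      (k / (max (Y ε₂ x) 0 + ε₂) - k / (max (Y ε₁ x) 0 + ε₁)
        - a * (Y ε₂ x - Y ε₁ x)) (Ici x) x := by
  simp only [ite_eq_max'] at hYeq
  have hcont : ∀ ε : ℝ, 0 < ε → Continuous (fun s => k / (max (Y ε s) 0 + ε)) := by
    intro ε hε
    refine continuous_const.div (((hYc ε hε).max continuous_const).add continuous_const) ?_
    intro s
    exact (add_pos_of_nonneg_of_pos (le_max_right _ _) hε).ne'
  set E : ℝ → ℝ := fun t =>
    (∫ s in (0:ℝ)..t, k / (max (Y ε₂ s) 0 + ε₂))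
      - (∫ s in (0:ℝ)..t, k / (max (Y ε₁ s) 0 + ε₁))
      - a * ((∫ s in (0:ℝ)..t, Y ε₂ s) - (∫ s in (0:ℝ)..t, Y ε₁ s)) with hE_def
  have hE : HasDerivAt E
      (k / (max (Y ε₂ x) 0 + ε₂) - k / (max (Y ε₁ x) 0 + ε₁)
        - a * (Y ε₂ x - Y ε₁ x)) x := by
    have d1 := ((hcont ε₂ h2).integral_hasStrictDerivAt 0 x).hasDerivAt
    have d2 := ((hcont ε₁ h1).integral_hasStrictDerivAt 0 x).hasDerivAt
    have d3 := ((hYc ε₂ h2).integral_hasStrictDerivAt 0 x).hasDerivAt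
    have d4 := ((hYc ε₁ h1).integral_hasStrictDerivAt 0 x).hasDerivAt
    exact (d1.sub d2).sub ((d3.sub d4).const_mul a)
  have heq : ∀ t ∈ Ici x, Y ε₂ t - Y ε₁ t = E t := by
    intro t ht
    have ht0 : (0:ℝ) ≤ t := le_trans hx ht
    rw [hYeq ε₂ h2 t ht0, hYeq ε₁ h1 t ht0, hE_def]
    ring
  exact hE.hasDerivWithinAt.congr heq (heq x self_mem_Ici)

/-- Monotonicity: the approximations decrease in ε. -/
private lemma Y_mono (Y₀ k a σ : ℝ) (hk : 0 < k)
    (g : ℝ → ℝ) (Y : ℝ → ℝ → ℝ)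
    (hYc : ∀ ε : ℝ, 0 < ε → Continuous (Y ε))
    (hYeq : ∀ ε : ℝ, 0 < ε → ∀ t : ℝ, 0 ≤ t →
      Y ε t = Y₀ + (∫ s in (0:ℝ)..t, k / ((if 0 < Y ε s then Y ε s else 0) + ε))
        - a * (∫ s in (0:ℝ)..t, Y ε s) + σ * g t)
    (hg0 : g 0 = 0)
    {ε₁ ε₂ : ℝ} (h1 : 0 < ε₁) (h12 : ε₁ ≤ ε₂) {t : ℝ} (ht : 0 ≤ t) :
    Y ε₂ t ≤ Y ε₁ t := by
  rcases eq_or_lt_of_le h12 with rfl | hlt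
  · exact le_rfl
  have h2 : 0 < ε₂ := h1.trans hlt
  have hzero : ∀ ε : ℝ, 0 < ε → Y ε 0 = Y₀ := by
    intro ε hε
    rw [hYeq ε hε 0 le_rfl]
    simp [hg0]
  have key : ∀ ⦃x⦄, x ∈ Icc (0:ℝ) t → Y ε₂ x - Y ε₁ x ≤ (fun _ : ℝ => (0:ℝ)) x := by
    apply image_le_of_deriv_right_lt_deriv_boundary
      (f := fun s => Y ε₂ s - Y ε₁ s)
      (f' := fun s => k / (max (Y ε₂ s) 0 + ε₂) - k / (max (Y ε₁ s) 0 + ε₁)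
        - a * (Y ε₂ s - Y ε₁ s)) (B := fun _ => (0:ℝ)) (B' := fun _ => (0:ℝ))
    · exact ((hYc ε₂ h2).sub (hYc ε₁ h1)).continuousOn
    · intro x hx
      exact diff_hasDeriv Y₀ k a σ g Y hYc hYeq h1 h2 hx.1
    · simp [hzero ε₁ h1, hzero ε₂ h2]
    · exact fun x => hasDerivAt_const x 0
    · intro x _ hfx
      have he : Y ε₂ x = Y ε₁ x := sub_eq_zero.mp hfx
      have hm : (0:ℝ) ≤ max (Y ε₁ x) 0 := le_max_right _ _
      have hdiv : k / (max (Y ε₁ x) 0 + ε₂) < k / (max (Y ε₁ x) 0 + ε₁) :=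
        div_lt_div_of_pos_left hk (add_pos_of_nonneg_of_pos hm h1) (by linarith)
      rw [he, sub_self, mul_zero, sub_zero]
      exact sub_neg.mpr hdiv
  exact sub_nonpos.mp (key ⟨ht, le_rfl⟩)

/-- Quantitative bound: once below θ at the left endpoint, the difference Y_ε - Y_{ε₀}
stays below θ on an interval where Y_{ε₀} is positive, provided ε < ε₀ ≤ θ. -/
private lemma Y_thresh (Y₀ k a σ : ℝ) (hk : 0 < k) (ha : 0 < a)
    (g : ℝ → ℝ) (Y : ℝ → ℝ → ℝ)
    (hYc : ∀ ε : ℝ, 0 < ε → Continuous (Y ε))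
    (hYeq : ∀ ε : ℝ, 0 < ε → ∀ t : ℝ, 0 ≤ t →
      Y ε t = Y₀ + (∫ s in (0:ℝ)..t, k / ((if 0 < Y ε s then Y ε s else 0) + ε))
        - a * (∫ s in (0:ℝ)..t, Y ε s) + σ * g t)
    (hg0 : g 0 = 0)
    {ε ε₀ θ l r : ℝ} (hε : 0 < ε) (hεε₀ : ε < ε₀) (hε₀θ : ε₀ ≤ θ) (hl : 0 ≤ l)
    (hpos : ∀ s ∈ Icc l r, 0 < Y ε₀ s)
    (hleft : Y ε l - Y ε₀ l ≤ θ) :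
    ∀ s ∈ Icc l r, Y ε s - Y ε₀ s ≤ θ := by
  have h0 : 0 < ε₀ := hε.trans hεε₀
  have hθ : 0 < θ := lt_of_lt_of_le h0 hε₀θ
  have key : ∀ ⦃x⦄, x ∈ Icc l r → Y ε x - Y ε₀ x ≤ (fun _ : ℝ => θ) x := by
    apply image_le_of_deriv_right_lt_deriv_boundary
      (f := fun s => Y ε s - Y ε₀ s)
      (f' := fun s => k / (max (Y ε s) 0 + ε) - k / (max (Y ε₀ s) 0 + ε₀)
        - a * (Y ε s - Y ε₀ s)) (B := fun _ => θ) (B' := fun _ => (0:ℝ))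
    · exact ((hYc ε hε).sub (hYc ε₀ h0)).continuousOn
    · intro x hx
      exact diff_hasDeriv Y₀ k a σ g Y hYc hYeq h0 hε (le_trans hl hx.1)
    · exact hleft
    · exact fun x => hasDerivAt_const x θ
    · intro x hx hfx
      have hx0 : (0:ℝ) ≤ x := le_trans hl hx.1
      have hpx : 0 < Y ε₀ x := hpos x ⟨hx.1, hx.2.le⟩
      have hmono : Y ε₀ x ≤ Y ε x :=
        Y_mono Y₀ k a σ hk g Y hYc hYeq hg0 hε hεε₀.le hx0
      have hYx : 0 < Y ε x := lt_of_lt_of_le hpx hmono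
      rw [max_eq_left hYx.le, max_eq_left hpx.le]
      have hAB : Y ε₀ x + ε₀ < Y ε x + ε := by
        have hδ : Y ε x - Y ε₀ x = θ := hfx
        linarith
      have hdiv : k / (Y ε x + ε) < k / (Y ε₀ x + ε₀) :=
        div_lt_div_of_pos_left hk (by linarith) hAB
      have haθ : 0 < a * θ := mul_pos ha hθ
      have hδ : Y ε x - Y ε₀ x = θ := hfx
      rw [hδ]
      linarith
  exact fun s hs => key hs

/-- Part 2 of Theorem 3: the limit process Y is continuous (within [0,∞)) at
every point of its positivity set, including t = 0 where Y(0) = Y₀ > 0. -/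
theorem limit_process_continuous_on_positivity_set
    (Y₀ k a σ : ℝ) (hY₀ : 0 < Y₀) (hk : 0 < k) (ha : 0 < a) (hσ : 0 < σ)
    (g : ℝ → ℝ) (hg : Continuous g) (hg0 : g 0 = 0)
    (Y : ℝ → ℝ → ℝ) (Ylim : ℝ → ℝ)
    (hYc : ∀ ε : ℝ, 0 < ε → Continuous (Y ε))
    (hYeq : ∀ ε : ℝ, 0 < ε → ∀ t : ℝ, 0 ≤ t →
      Y ε t = Y₀ + (∫ s in (0:ℝ)..t, k / ((if 0 < Y ε s then Y ε s else 0) + ε))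
        - a * (∫ s in (0:ℝ)..t, Y ε s) + σ * g t)
    (hlim : ∀ t : ℝ, 0 ≤ t →
      Tendsto (fun ε => Y ε t) (𝓝[>] 0) (𝓝 (Ylim t))) :
    Ylim 0 = Y₀ ∧
    ∀ t : ℝ, 0 ≤ t → 0 < Ylim t → ContinuousWithinAt Ylim (Set.Ici (0:ℝ)) t := by
  have hzero : ∀ ε : ℝ, 0 < ε → Y ε 0 = Y₀ := by
    intro ε hε
    rw [hYeq ε hε 0 le_rfl]
    simp [hg0]
  have mono : ∀ ε₁ ε₂ : ℝ, 0 < ε₁ → ε₁ ≤ ε₂ → ∀ t : ℝ, 0 ≤ t → Y ε₂ t ≤ Y ε₁ t :=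
    fun _ _ h1 h12 _ ht => Y_mono Y₀ k a σ hk g Y hYc hYeq hg0 h1 h12 ht
  constructor
  · refine tendsto_nhds_unique (hlim 0 le_rfl) ?_
    refine Tendsto.congr' ?_ (tendsto_const_nhds (x := Y₀))
    filter_upwards [self_mem_nhdsWithin] with ε hε
    exact (hzero ε hε).symm
  intro t₀ ht₀ hposlim
  -- `Y ε t ≤ Ylim t`
  have hle : ∀ ε : ℝ, 0 < ε → ∀ t : ℝ, 0 ≤ t → Y ε t ≤ Ylim t := by
    intro ε hε t ht
    refine ge_of_tendsto (hlim t ht) ?_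
    filter_upwards [Ioo_mem_nhdsGT_of_mem ⟨le_rfl, hε⟩] with ε' hε'
    exact mono _ _ hε'.1 hε'.2.le _ ht
  -- a positivity interval for some ε₁
  obtain ⟨ε₁, hε₁mem, hε₁pos⟩ : ∃ ε₁, ε₁ ∈ Ioi (0:ℝ) ∧ 0 < Y ε₁ t₀ := by
    have h1 : ∀ᶠ ε in 𝓝[>] (0:ℝ), 0 < Y ε t₀ :=
      (hlim t₀ ht₀).eventually (eventually_gt_nhds hposlim)
    exact (eventually_mem_nhdsWithin.and h1).exists.imp (fun ε h => ⟨h.1, h.2⟩)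
  have hε₁0 : 0 < ε₁ := hε₁mem
  obtain ⟨η, hη, hball⟩ : ∃ η > 0, ∀ ⦃s : ℝ⦄, dist s t₀ < η → 0 < Y ε₁ s := by
    have : ∀ᶠ s in 𝓝 t₀, 0 < Y ε₁ s :=
      ((hYc ε₁ hε₁0).continuousAt (x := t₀)).eventually (eventually_gt_nhds hε₁pos)
    exact Metric.eventually_nhds_iff.mp this
  set l : ℝ := max 0 (t₀ - η / 2) with hl_def
  set r : ℝ := t₀ + η / 2 with hr_def
  have hl0 : (0:ℝ) ≤ l := le_max_left _ _
  have hlt₀ : l ≤ t₀ := max_le ht₀ (by linarith)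
  have ht₀r : t₀ ≤ r := by rw [hr_def]; linarith
  have hIcc : ∀ s ∈ Icc l r, dist s t₀ < η := by
    intro s hs
    have h1 : t₀ - η / 2 ≤ s := le_trans (le_max_right _ _) hs.1
    have h2 : s ≤ t₀ + η / 2 := hs.2
    rw [Real.dist_eq, abs_lt]
    constructor <;> linarith
  have hpos₁ : ∀ s ∈ Icc l r, 0 < Y ε₁ s := fun s hs => hball (hIcc s hs)
  -- continuity within Ici 0 at t₀
  show Tendsto Ylim (𝓝[Set.Ici (0:ℝ)] t₀) (𝓝 (Ylim t₀))
  refine Metric.tendsto_nhds.mpr ?_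
  intro δ hδ
  set θ : ℝ := δ / 3 with hθ_def
  have hθ : 0 < θ := by rw [hθ_def]; linarith
  -- choose ε₀
  obtain ⟨ε₀, hε₀pos, hε₀lt, hε₀close⟩ :
      ∃ ε₀, 0 < ε₀ ∧ ε₀ < min ε₁ θ ∧ Ylim l - Y ε₀ l ≤ θ := by
    have h1 : ∀ᶠ ε in 𝓝[>] (0:ℝ), ε ∈ Ioo 0 (min ε₁ θ) :=
      Ioo_mem_nhdsGT_of_mem ⟨le_rfl, lt_min hε₁0 hθ⟩
    have h2 : ∀ᶠ ε in 𝓝[>] (0:ℝ), Ylim l - θ < Y ε l :=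
      (hlim l hl0).eventually (eventually_gt_nhds (by linarith : Ylim l - θ < Ylim l))
    obtain ⟨ε₀, hA, hB⟩ := (h1.and h2).exists
    exact ⟨ε₀, hA.1, hA.2, by linarith⟩
  have hε₀ε₁ : ε₀ ≤ ε₁ := (lt_of_lt_of_le hε₀lt (min_le_left _ _)).le
  have hε₀θ : ε₀ ≤ θ := (lt_of_lt_of_le hε₀lt (min_le_right _ _)).le
  have hpos₀ : ∀ s ∈ Icc l r, 0 < Y ε₀ s :=
    fun s hs => lt_of_lt_of_le (hpos₁ s hs) (mono _ _ hε₀pos hε₀ε₁ _ (le_trans hl0 hs.1))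
  -- uniform bound from above on Icc l r
  have hub : ∀ s ∈ Icc l r, Ylim s ≤ Y ε₀ s + θ := by
    intro s hs
    have hs0 : (0:ℝ) ≤ s := le_trans hl0 hs.1
    refine le_of_tendsto (hlim s hs0) ?_
    filter_upwards [Ioo_mem_nhdsGT_of_mem ⟨le_rfl, hε₀pos⟩] with ε hε
    have hYl : Y ε l ≤ Ylim l := hle ε hε.1 l hl0
    have hleft : Y ε l - Y ε₀ l ≤ θ := by linarith
    have := Y_thresh Y₀ k a σ hk ha g Y hYc hYeq hg0
      hε.1 hε.2 hε₀θ hl0 hpos₀ hleft s hs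
    linarith
  have hlb : ∀ s ∈ Icc l r, Y ε₀ s ≤ Ylim s :=
    fun s hs => hle ε₀ hε₀pos s (le_trans hl0 hs.1)
  -- continuity of Y ε₀ at t₀
  have hcY : ∀ᶠ s in 𝓝 t₀, dist (Y ε₀ s) (Y ε₀ t₀) < θ :=
    Metric.tendsto_nhds.mp ((hYc ε₀ hε₀pos).continuousAt (x := t₀)) θ hθ
  have hmem : ∀ᶠ s in 𝓝[Set.Ici (0:ℝ)] t₀, s ∈ Icc l r := by
    have hIm : Icc (t₀ - η / 2) (t₀ + η / 2) ∈ 𝓝 t₀ :=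
      Icc_mem_nhds (by linarith) (by linarith)
    filter_upwards [mem_nhdsWithin_of_mem_nhds hIm, self_mem_nhdsWithin] with s hs hs0
    exact ⟨max_le hs0 hs.1, hs.2⟩
  filter_upwards [hmem, hcY.filter_mono nhdsWithin_le_nhds] with s hs hds
  have h1 := hub s hs
  have h2 := hlb s hs
  have h3 := hub t₀ ⟨hlt₀, ht₀r⟩
  have h4 := hlb t₀ ⟨hlt₀, ht₀r⟩
  rw [Real.dist_eq] at hds ⊢
  obtain ⟨hd1, hd2⟩ := abs_lt.mp hds
  rw [abs_lt]
  constructor <;> linarith [hθ_def.le, hθ_def.ge]
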